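/- Let p be a prime. The map (g,h,a) ↦ (h,a) is a bijection between the set of triples (g,h,a) with 1 ≤ g,h,a ≤ p-1, gcd(h,a,p-1) = 1, g^h ≡ a (mod p) and g^a ≡ h (mod p), and the set of pairs (h,a) with 1 ≤ h,a ≤ p-1, gcd(h,a,p-1) = 1 and h^h ≡ a^a (mod p). In particular, for each such pair (h,a) the value of g with 1 ≤ g ≤ p-1 satisfying g^h ≡ a (mod p) and g^a ≡ h (mod p) exists and is unique. -/
import Mathlib


lemma grp_exu {G : Type*} [CommGroup G] (h a n : ℕ) (hall : ∀ x : G, x ^ n = 1)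
    (hg : Nat.gcd h (Nat.gcd a n) = 1) (H A : G) (hha : H ^ h = A ^ a) :
    ∃! g : G, g ^ h = A ∧ g ^ a = H := by
  set d := Nat.gcd a n with hd
  obtain ⟨x, y', e1⟩ : ∃ x y' : ℤ, x * h + y' * d = 1 := by
    have h1 := Nat.gcd_eq_gcd_ab h d
    rw [hg] at h1
    refine ⟨Nat.gcdA h d, Nat.gcdB h d, ?_⟩
    push_cast at h1
    linarith
  obtain ⟨u, v, e2⟩ : ∃ u v : ℤ, u * a + v * n = (d : ℤ) := by
    have h2 := Nat.gcd_eq_gcd_ab a n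
    exact ⟨Nat.gcdA a n, Nat.gcdB a n, by rw [hd, h2]; ring⟩
  set y : ℤ := y' * u with hy
  set z : ℤ := y' * v with hz
  have e3 : x * h + y * a + z * n = 1 := by
    have h4 : x * h + y' * (u * a + v * n) = 1 := by rw [e2]; exact e1
    rw [hy, hz]; linarith
  have hallz : ∀ w : G, w ^ (n : ℤ) = 1 := fun w => by rw [zpow_natCast]; exact hall w
  have hhaz : H ^ (h : ℤ) = A ^ (a : ℤ) := by rw [zpow_natCast, zpow_natCast, hha]
  have collapse : ∀ (B : G) (w : ℤ), B ^ (1 + w * (n:ℤ)) = B := fun B w => by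
    rw [zpow_add, zpow_one, mul_comm w, zpow_mul, hallz, one_zpow, mul_one]
  have expand : ∀ w : ℤ, (A ^ x * H ^ y) ^ w = A ^ (x*w) * H ^ (y*w) := fun w => by
    rw [mul_zpow, ← zpow_mul A, ← zpow_mul H]
  have Gh : (A ^ x * H ^ y) ^ (h:ℤ) = A := by
    calc (A ^ x * H ^ y) ^ (h:ℤ) = A ^ (x*(h:ℤ)) * H ^ (y*(h:ℤ)) := expand _
      _ = A ^ (x*(h:ℤ)) * A ^ ((a:ℤ)*y) := by
          rw [mul_comm y ((h:ℕ):ℤ), zpow_mul H ((h:ℕ):ℤ) y, hhaz, ← zpow_mul A ((a:ℕ):ℤ) y]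
      _ = A ^ (x*(h:ℤ) + (a:ℤ)*y) := (zpow_add A _ _).symm
      _ = A ^ (1 + (-z) * (n:ℤ)) := by congr 1; linarith
      _ = A := collapse A _
  have Ga : (A ^ x * H ^ y) ^ (a:ℤ) = H := by
    calc (A ^ x * H ^ y) ^ (a:ℤ) = A ^ (x*(a:ℤ)) * H ^ (y*(a:ℤ)) := expand _
      _ = H ^ ((h:ℤ)*x) * H ^ (y*(a:ℤ)) := by
          rw [mul_comm x ((a:ℕ):ℤ), zpow_mul A ((a:ℕ):ℤ) x, ← hhaz, ← zpow_mul H ((h:ℕ):ℤ) x]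
      _ = H ^ ((h:ℤ)*x + y*(a:ℤ)) := (zpow_add H _ _).symm
      _ = H ^ (1 + (-z) * (n:ℤ)) := by congr 1; linarith
      _ = H := collapse H _
  have runiq : ∀ r : G, r ^ h = 1 → r ^ a = 1 → r = 1 := by
    intro r r1 r2
    have : r = r ^ (x*(h:ℤ) + y*a + z*n) := by rw [e3, zpow_one]
    rw [this, zpow_add, zpow_add,
      mul_comm x ((h:ℕ):ℤ), zpow_mul r ((h:ℕ):ℤ) x,
      mul_comm y ((a:ℕ):ℤ), zpow_mul r ((a:ℕ):ℤ) y,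
      mul_comm z ((n:ℕ):ℤ), zpow_mul r ((n:ℕ):ℤ) z,
      zpow_natCast r h, zpow_natCast r a, zpow_natCast r n,
      r1, r2, hall, one_zpow, one_zpow, one_zpow, mul_one, mul_one]
  refine ⟨A ^ x * H ^ y, ⟨by rw [← zpow_natCast, Gh], by rw [← zpow_natCast, Ga]⟩, ?_⟩
  rintro g ⟨hg1, hg2⟩
  have hr : g * (A ^ x * H ^ y)⁻¹ = 1 := by
    apply runiq
    · rw [mul_pow, inv_pow, hg1, ← zpow_natCast, Gh, mul_inv_cancel]
    · rw [mul_pow, inv_pow, hg2, ← zpow_natCast, Ga, mul_inv_cancel]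
  exact mul_inv_eq_one.mp hr

lemma nat_exu (p : ℕ) (hp : p.Prime) (h a : ℕ) (hh1 : 1 ≤ h) (hh2 : h ≤ p - 1)
    (ha1 : 1 ≤ a) (ha2 : a ≤ p - 1) (hgcd : Nat.gcd h (Nat.gcd a (p - 1)) = 1)
    (hmod : h ^ h ≡ a ^ a [MOD p]) :
    ∃! g : ℕ, 1 ≤ g ∧ g ≤ p - 1 ∧ g ^ h ≡ a [MOD p] ∧ g ^ a ≡ h [MOD p] := by
  haveI : Fact p.Prime := ⟨hp⟩
  have ne0 : ∀ x : ℕ, 1 ≤ x → x ≤ p - 1 → (x : ZMod p) ≠ 0 := by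
    intro x hx1 hx2 hx0
    rw [ZMod.natCast_eq_zero_iff] at hx0
    have hxp : x < p := lt_of_le_of_lt hx2 (Nat.sub_lt hp.pos one_pos)
    exact absurd (Nat.le_of_dvd hx1 hx0) (not_le.mpr hxp)
  set H : (ZMod p)ˣ := Units.mk0 (h : ZMod p) (ne0 h hh1 hh2) with hH
  set A : (ZMod p)ˣ := Units.mk0 (a : ZMod p) (ne0 a ha1 ha2) with hA
  have hmodc : ((h : ZMod p)) ^ h = ((a : ZMod p)) ^ a := by
    have := (ZMod.natCast_eq_natCast_iff _ _ _).mpr hmod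
    push_cast at this
    exact this
  have hha : H ^ h = A ^ a := by
    apply Units.ext
    simpa [hH, hA] using hmodc
  obtain ⟨g₀, ⟨hg1, hg2⟩, huni⟩ :=
    grp_exu h a (p - 1) (ZMod.units_pow_card_sub_one_eq_one p) hgcd H A hha
  refine ⟨(g₀ : ZMod p).val, ⟨?_, ?_, ?_, ?_⟩, ?_⟩
  · have : (g₀ : ZMod p).val ≠ 0 := by
      simpa [ZMod.val_eq_zero] using g₀.ne_zero
    omega
  · exact Nat.le_sub_one_of_lt (ZMod.val_lt _)
  · apply (ZMod.natCast_eq_natCast_iff _ _ _).mp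
    push_cast
    rw [ZMod.natCast_val, ZMod.cast_id]
    have := congrArg Units.val hg1
    simpa [hA] using this
  · apply (ZMod.natCast_eq_natCast_iff _ _ _).mp
    push_cast
    rw [ZMod.natCast_val, ZMod.cast_id]
    have := congrArg Units.val hg2
    simpa [hH] using this
  · rintro g' ⟨p1, p2, p3, p4⟩
    have hg'0 : (g' : ZMod p) ≠ 0 := by
      intro h0
      have hc := (ZMod.natCast_eq_natCast_iff _ _ _).mpr p3
      push_cast at hc
      rw [h0, zero_pow (by omega : h ≠ 0)] at hc
      exact ne0 a ha1 ha2 hc.symm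
    set G' : (ZMod p)ˣ := Units.mk0 _ hg'0 with hG'
    have hG'h : G' ^ h = A := by
      apply Units.ext
      have hc := (ZMod.natCast_eq_natCast_iff _ _ _).mpr p3
      push_cast at hc
      simpa [hG', hA] using hc
    have hG'a : G' ^ a = H := by
      apply Units.ext
      have hc := (ZMod.natCast_eq_natCast_iff _ _ _).mpr p4
      push_cast at hc
      simpa [hG', hH] using hc
    have hGg : G' = g₀ := huni G' ⟨hG'h, hG'a⟩
    have : (G' : ZMod p) = (g₀ : ZMod p) := congrArg Units.val hGg
    have hval : (g' : ZMod p).val = (g₀ : ZMod p).val := by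
      rw [← this]; simp [hG']
    have hg'p : g' < p := lt_of_le_of_lt p2 (Nat.sub_lt hp.pos one_pos)
    rw [← hval, ZMod.val_cast_of_lt hg'p]

/-- For a prime `p`, the map `(g,h,a) ↦ (h,a)` is a bijection between the set of two-cycle
triples with `gcd(h,a,p-1) = 1` and the set of pairs `(h,a)` with `gcd(h,a,p-1) = 1` and
`h^h ≡ a^a (mod p)`; in particular for each such pair the corresponding `g` exists and is
unique. -/
theorem two_cycle_bijection (p : ℕ) (hp : p.Prime) :
    Set.BijOn (fun t : ℕ × ℕ × ℕ => (t.2.1, t.2.2))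
      {t : ℕ × ℕ × ℕ | 1 ≤ t.1 ∧ t.1 ≤ p - 1 ∧ 1 ≤ t.2.1 ∧ t.2.1 ≤ p - 1 ∧
        1 ≤ t.2.2 ∧ t.2.2 ≤ p - 1 ∧ Nat.gcd t.2.1 (Nat.gcd t.2.2 (p - 1)) = 1 ∧
        t.1 ^ t.2.1 ≡ t.2.2 [MOD p] ∧ t.1 ^ t.2.2 ≡ t.2.1 [MOD p]}
      {ha : ℕ × ℕ | 1 ≤ ha.1 ∧ ha.1 ≤ p - 1 ∧ 1 ≤ ha.2 ∧ ha.2 ≤ p - 1 ∧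
        Nat.gcd ha.1 (Nat.gcd ha.2 (p - 1)) = 1 ∧ ha.1 ^ ha.1 ≡ ha.2 ^ ha.2 [MOD p]} ∧
    ∀ h a : ℕ, 1 ≤ h → h ≤ p - 1 → 1 ≤ a → a ≤ p - 1 →
      Nat.gcd h (Nat.gcd a (p - 1)) = 1 → h ^ h ≡ a ^ a [MOD p] →
      ∃! g : ℕ, 1 ≤ g ∧ g ≤ p - 1 ∧ g ^ h ≡ a [MOD p] ∧ g ^ a ≡ h [MOD p] := by
  constructor
  · refine ⟨?_, ?_, ?_⟩
    · rintro ⟨g, h, a⟩ ⟨hg1, hg2, hh1, hh2, ha1, ha2, hgcd, m1, m2⟩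
      refine ⟨hh1, hh2, ha1, ha2, hgcd, ?_⟩
      have c3 : (g ^ a) ^ h = (g ^ h) ^ a := by
        rw [← pow_mul, ← pow_mul, mul_comm]
      calc h ^ h ≡ (g ^ a) ^ h [MOD p] := (m2.pow h).symm
        _ = (g ^ h) ^ a := c3
        _ ≡ a ^ a [MOD p] := m1.pow a
    · rintro ⟨g1, h1, a1⟩ ⟨q1, q2, q3, q4, q5, q6, q7, q8, q9⟩
        ⟨g2, h2, a2⟩ ⟨r1, r2, r3, r4, r5, r6, r7, r8, r9⟩ heq
      simp only [Prod.mk.injEq] at heq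
      obtain ⟨eh, ea⟩ := heq
      subst eh; subst ea
      have := nat_exu p hp h1 a1 q3 q4 q5 q6 q7 (by
        have c3 : (g1 ^ a1) ^ h1 = (g1 ^ h1) ^ a1 := by
          rw [← pow_mul, ← pow_mul, mul_comm]
        calc h1 ^ h1 ≡ (g1 ^ a1) ^ h1 [MOD p] := (q9.pow h1).symm
          _ = (g1 ^ h1) ^ a1 := c3
          _ ≡ a1 ^ a1 [MOD p] := q8.pow a1)
      have hgg : g1 = g2 := this.unique ⟨q1, q2, q8, q9⟩ ⟨r1, r2, r8, r9⟩
      rw [hgg]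
    · rintro ⟨h, a⟩ ⟨hh1, hh2, ha1, ha2, hgcd, hmod⟩
      obtain ⟨g, ⟨g1, g2, g3, g4⟩, -⟩ := nat_exu p hp h a hh1 hh2 ha1 ha2 hgcd hmod
      exact ⟨(g, h, a), ⟨g1, g2, hh1, hh2, ha1, ha2, hgcd, g3, g4⟩, rfl⟩
  · exact fun h a h1 h2 a1 a2 hg hm => nat_exu p hp h a h1 h2 a1 a2 hg hm
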